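/- arXiv:1609.09449 — 2 statements merged into one kernel-verified Lean document; each statement's English description precedes it below -/
import Mathlib

section
/- Let J : Z → ℝ be continuous on a compact set Z ⊂ ℝ^k with unique global maximizer z*. For the point mass θ_{z'} at z' ∈ Z, the (1-ρ)-quantile of J under the mixture μ̂ = (1-λ)δ_{z'} + λμ₀ equals J(z*) only if z' = z*, provided ρ < λ ∈ (0,1) and μ₀({z : J(z) ≥ J(z*)}) = 0 while μ₀ has full support giving μ₀(J ≥ l) > 0 for every l < J(z*). -/
open MeasureTheory Filter Topology

theorem stmt_16 {k : ℕ} (Z : Set (Fin k → ℝ)) (hZ : IsCompact Z)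
    (J : (Fin k → ℝ) → ℝ) (hJ : Continuous J)
    (zstar : Fin k → ℝ) (hzstar : zstar ∈ Z)
    (hmax : ∀ z ∈ Z, z ≠ zstar → J z < J zstar)
    (z' : Fin k → ℝ) (hz' : z' ∈ Z)
    (μ₀ : Measure (Fin k → ℝ)) [IsProbabilityMeasure μ₀]
    (lam ρ : ℝ) (hlam : lam ∈ Set.Ioo (0:ℝ) 1) (hρ : ρ ∈ Set.Ioo (0:ℝ) lam)
    (hμ₀zero : μ₀ {z | J zstar ≤ J z} = 0)
    (hμ₀pos : ∀ l < J zstar, 0 < μ₀ {z | l ≤ J z}) :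
    let μhat : Measure (Fin k → ℝ) :=
      (ENNReal.ofReal (1 - lam)) • Measure.dirac z' + (ENNReal.ofReal lam) • μ₀
    sSup {l : ℝ | ρ ≤ (μhat {z | l ≤ J z}).toReal} = J zstar → z' = zstar := by
  intro μhat hsup
  by_contra hne
  obtain ⟨hlam0, hlam1⟩ := hlam
  obtain ⟨hρ0, hρlam⟩ := hρ
  have hJz' : J z' < J zstar := hmax z' hz' hne
  have hmeas : ∀ l : ℝ, MeasurableSet {z : Fin k → ℝ | l ≤ J z} := fun l =>
    measurableSet_le measurable_const hJ.measurable
  have hμhat : ∀ A : Set (Fin k → ℝ), MeasurableSet A →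
      μhat A = ENNReal.ofReal (1 - lam) * (Measure.dirac z') A
        + ENNReal.ofReal lam * μ₀ A := by
    intro A hA
    simp [μhat]
  have hfin : ∀ A : Set (Fin k → ℝ), μhat A ≠ ⊤ := by
    intro A
    have h1 : μhat A ≤ μhat Set.univ := measure_mono (Set.subset_univ A)
    have h2 : μhat Set.univ = ENNReal.ofReal (1 - lam) + ENNReal.ofReal lam := by
      rw [hμhat Set.univ MeasurableSet.univ]; simp
    intro h
    rw [h, h2, top_le_iff] at h1
    exact ENNReal.add_ne_top.mpr ⟨ENNReal.ofReal_ne_top, ENNReal.ofReal_ne_top⟩ h1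
  -- the quantile set
  set S : Set ℝ := {l : ℝ | ρ ≤ (μhat {z | l ≤ J z}).toReal} with hS
  -- S is nonempty
  have hSne : S.Nonempty := by
    set B : ℕ → Set (Fin k → ℝ) := fun n => {z | -(n : ℝ) ≤ J z} with hB
    have hBmono : Monotone B := by
      intro m n hmn z hz
      simp only [hB, Set.mem_setOf_eq] at hz ⊢
      have hc : (m : ℝ) ≤ n := Nat.cast_le.mpr hmn
      linarith
    have hBunion : ⋃ n, B n = Set.univ := by
      ext z
      simp only [Set.mem_iUnion, Set.mem_univ, iff_true]
      obtain ⟨n, hn⟩ := exists_nat_gt (-(J z))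
      exact ⟨n, by simp [hB]; linarith⟩
    have htend : Tendsto (fun n => μ₀ (B n)) atTop (𝓝 (μ₀ (⋃ n, B n))) :=
      tendsto_measure_iUnion_atTop hBmono
    rw [hBunion, measure_univ] at htend
    have hlt : ENNReal.ofReal (ρ / lam) < 1 := by
      rw [ENNReal.ofReal_lt_one]
      rw [div_lt_one hlam0]
      exact hρlam
    have hev := htend.eventually_const_lt hlt
    obtain ⟨n, hn⟩ := hev.exists
    refine ⟨-(n : ℝ), ?_⟩
    have hge : ENNReal.ofReal ρ ≤ μhat (B n) := by
      rw [hμhat (B n) (hmeas _)]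
      have : ENNReal.ofReal lam * ENNReal.ofReal (ρ / lam) ≤ ENNReal.ofReal lam * μ₀ (B n) := by
        exact mul_le_mul_of_nonneg_left hn.le zero_le'
      calc ENNReal.ofReal ρ = ENNReal.ofReal lam * ENNReal.ofReal (ρ / lam) := by
            rw [← ENNReal.ofReal_mul hlam0.le, mul_div_cancel₀ _ (ne_of_gt hlam0)]
        _ ≤ ENNReal.ofReal lam * μ₀ (B n) := this
        _ ≤ _ := le_add_self
    have : ρ ≤ (μhat (B n)).toReal := by
      have := ENNReal.toReal_mono (hfin _) hge
      rwa [ENNReal.toReal_ofReal hρ0.le] at this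
    exact this
  -- an upper bound below J zstar
  set A : ℕ → Set (Fin k → ℝ) := fun n => {z | J zstar - 1 / (n + 1) ≤ J z} with hA
  have hAanti : Antitone A := by
    intro m n hmn z hz
    have h1 : (1 : ℝ) / (n + 1) ≤ 1 / (m + 1) := by
      apply one_div_le_one_div_of_le
      · positivity
      · have hc : (m : ℝ) ≤ n := Nat.cast_le.mpr hmn
        linarith
    simp only [hA, Set.mem_setOf_eq] at hz ⊢
    linarith
  have hAinter : ⋂ n, A n = {z | J zstar ≤ J z} := by
    ext z
    simp only [Set.mem_iInter, Set.mem_setOf_eq, hA]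
    constructor
    · intro h
      by_contra hc
      push_neg at hc
      obtain ⟨n, hn⟩ := exists_nat_one_div_lt (show (0:ℝ) < J zstar - J z by linarith)
      have := h n
      linarith
    · intro h n
      have : (0:ℝ) < 1 / (n + 1) := by positivity
      linarith
  have htendA : Tendsto (fun n => μ₀ (A n)) atTop (𝓝 (μ₀ (⋂ n, A n))) :=
    tendsto_measure_iInter_atTop (fun n => (hmeas _).nullMeasurableSet) hAanti
      ⟨0, measure_ne_top μ₀ _⟩
  rw [hAinter, hμ₀zero] at htendA
  have hpos : (0 : ENNReal) < ENNReal.ofReal (ρ / lam) := ENNReal.ofReal_pos.mpr (by positivity)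
  have hev2 := htendA.eventually_lt_const hpos
  obtain ⟨n1, hn1'⟩ := exists_nat_one_div_lt (show (0:ℝ) < J zstar - J z' by linarith)
  rw [eventually_atTop] at hev2
  obtain ⟨n2, hn2⟩ := hev2
  set n := max n1 n2 with hn
  have hμAn : μ₀ (A n) < ENNReal.ofReal (ρ / lam) := hn2 n (le_max_right _ _)
  have hfrac : (1:ℝ) / (n + 1) ≤ 1 / (n1 + 1) := by
    apply one_div_le_one_div_of_le
    · positivity
    · have hc : (n1 : ℝ) ≤ n := Nat.cast_le.mpr (le_max_left n1 n2)
      linarith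
  set l : ℝ := J zstar - 1 / (n + 1) with hl
  have hlz' : J z' < l := by
    have : (1:ℝ) / (n + 1) < J zstar - J z' := lt_of_le_of_lt hfrac hn1'
    simp only [hl]; linarith
  have hllt : l < J zstar := by
    have : (0:ℝ) < 1 / (n + 1) := by positivity
    simp only [hl]; linarith
  have hub : ∀ m ∈ S, m ≤ l := by
    intro m hm
    by_contra hc
    push_neg at hc
    have hsub : {z : Fin k → ℝ | m ≤ J z} ⊆ A n := by
      intro z hz
      exact le_trans hc.le hz
    have hdirac : (Measure.dirac z') {z : Fin k → ℝ | m ≤ J z} = 0 := by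
      rw [Measure.dirac_apply' _ (hmeas m)]
      simp only [Set.indicator_apply, Set.mem_setOf_eq]
      rw [if_neg (show ¬ m ≤ J z' from not_le.mpr (by linarith))]
    have hlt2 : μhat {z | m ≤ J z} < ENNReal.ofReal ρ := by
      rw [hμhat _ (hmeas m), hdirac, mul_zero, zero_add]
      calc ENNReal.ofReal lam * μ₀ {z | m ≤ J z}
          ≤ ENNReal.ofReal lam * μ₀ (A n) := mul_le_mul_of_nonneg_left (measure_mono hsub) zero_le'
        _ < ENNReal.ofReal lam * ENNReal.ofReal (ρ / lam) := by
            exact ENNReal.mul_lt_mul_right (by simp [hlam0]) (by simp) hμAn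
        _ = ENNReal.ofReal ρ := by
            rw [← ENNReal.ofReal_mul hlam0.le, mul_div_cancel₀ _ (ne_of_gt hlam0)]
    have : (μhat {z | m ≤ J z}).toReal < ρ := by
      have := ENNReal.toReal_lt_toReal (hfin _) (by simp : ENNReal.ofReal ρ ≠ ⊤) |>.mpr hlt2
      rwa [ENNReal.toReal_ofReal hρ0.le] at this
    exact absurd hm (by simp only [hS, Set.mem_setOf_eq]; linarith)
  have : sSup S ≤ l := csSup_le hSne hub
  rw [hsup] at this
  linarith
end

section
/- For the multivariate Gaussian density f_θ with mean μ and covariance Σ on ℝ^m, and a twice continuously differentiable bounded function g : ℝ^m → ℝ with bounded derivatives, the identity E[g(X)(X-μ)(X-μ)ᵀ] - E[g(X)]Σ = Σ E[∇²g(X)] Σ holds, where X ~ N(μ, Σ). -/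
open MeasureTheory Real Matrix

variable {m : ℕ}

noncomputable def LP (P : Matrix (Fin m) (Fin m) ℝ) (μv x : Fin m → ℝ) : (Fin m → ℝ) →L[ℝ] ℝ :=
  ∑ i, (P.mulVec (x - μv) i) • (ContinuousLinearMap.proj i)

lemma LP_apply (P : Matrix (Fin m) (Fin m) ℝ) (μv x : Fin m → ℝ) (k : Fin m) :
    LP P μv x (Pi.single k 1) = P.mulVec (x - μv) k := by
  simp [LP, ContinuousLinearMap.sum_apply, Pi.single_apply, Finset.sum_ite_eq']

lemma hasFDerivAt_quad (P : Matrix (Fin m) (Fin m) ℝ) (hP : Pᵀ = P) (μv : Fin m → ℝ)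
    (x : Fin m → ℝ) :
    HasFDerivAt (fun y : Fin m → ℝ => dotProduct (y - μv) (P.mulVec (y - μv)))
      ((2:ℝ) • LP P μv x) x := by
  have hsym : ∀ i j, P j i = P i j :=
    fun i j => (Matrix.transpose_apply P i j).symm.trans (congrFun (congrFun hP i) j)
  have h : ∀ y : Fin m → ℝ, dotProduct (y - μv) (P.mulVec (y - μv)) =
      ∑ i, ∑ j, (y i - μv i) * (P i j * (y j - μv j)) := by
    intro y
    simp [dotProduct, Matrix.mulVec, Finset.mul_sum]
  rw [show (fun y : Fin m → ℝ => dotProduct (y - μv) (P.mulVec (y - μv))) =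
      (fun y => ∑ i, ∑ j, (y i - μv i) * (P i j * (y j - μv j))) from funext h]
  have H : ∀ (i j : Fin m), HasFDerivAt (fun y : Fin m → ℝ => (y i - μv i) * (P i j * (y j - μv j)))
      ((x i - μv i) • (P i j • (ContinuousLinearMap.proj j : (Fin m → ℝ) →L[ℝ] ℝ))
        + (P i j * (x j - μv j)) • (ContinuousLinearMap.proj i : (Fin m → ℝ) →L[ℝ] ℝ)) x := by
    intro i j
    exact ((hasFDerivAt_apply i x).sub_const _).mul
      (((hasFDerivAt_apply j x).sub_const _).const_mul _)
  have := HasFDerivAt.sum (fun i (_ : i ∈ Finset.univ) =>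
    HasFDerivAt.sum (fun j (_ : j ∈ Finset.univ) => H i j))
  convert this using 1
  iterate 5 with_reducible_and_instances rfl
  · ext y
    simp [Finset.sum_apply]
  ext v
  simp only [ContinuousLinearMap.smul_apply, ContinuousLinearMap.sum_apply,
    ContinuousLinearMap.add_apply, ContinuousLinearMap.proj_apply, smul_eq_mul, LP]
  have key : ∑ i, ∑ j, ((x i - μv i) * (P i j * v j) + P i j * (x j - μv j) * v i)
      = ∑ i, (2 * ((P *ᵥ (x - μv)) i * v i)) := by
    simp only [Finset.sum_add_distrib]
    rw [Finset.sum_comm]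
    simp only [Matrix.mulVec, dotProduct, Finset.sum_mul, Finset.mul_sum, two_mul]
    rw [← Finset.sum_add_distrib]
    refine Finset.sum_congr rfl fun i _ => ?_
    rw [← Finset.sum_add_distrib]
    refine Finset.sum_congr rfl fun j _ => ?_
    rw [hsym i j]
    simp only [Pi.sub_apply]
    ring
  rw [Finset.mul_sum]
  exact key.symm

lemma hasFDerivAt_pdfa (P : Matrix (Fin m) (Fin m) ℝ) (hP : Pᵀ = P) (μv : Fin m → ℝ) (c0 : ℝ)
    (x : Fin m → ℝ) :
    HasFDerivAt
      (fun y : Fin m → ℝ =>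
        c0 * Real.exp (-(dotProduct (y - μv) (P.mulVec (y - μv))) / 2))
      ((-(c0 * Real.exp (-(dotProduct (x - μv) (P.mulVec (x - μv))) / 2))) • LP P μv x)
      x := by
  have hq := hasFDerivAt_quad P hP μv x
  have h1 : HasFDerivAt
      (fun y : Fin m → ℝ => -(dotProduct (y - μv) (P.mulVec (y - μv))) / 2)
      ((-(1/2) : ℝ) • ((2:ℝ) • LP P μv x)) x := by
    have h := hq.const_mul (-(1/2) : ℝ)
    convert h using 1
    iterate 5 with_reducible_and_instances rfl
    funext y
    ring
  have h2 := h1.exp.const_mul c0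
  convert h2 using 1
  iterate 5 with_reducible_and_instances rfl
  ext v
  simp only [ContinuousLinearMap.smul_apply, smul_eq_mul]
  ring

variable {m : ℕ}

lemma poly_exp_bound (n : ℕ) {c : ℝ} (hc : 0 < c) :
    ∃ K, 0 ≤ K ∧ ∀ s : ℝ, 0 ≤ s →
      (1+s)^n * Real.exp (-(c*s^2)) ≤ K * Real.exp (-(c/2*s^2)) := by
  refine ⟨Real.exp ((n:ℝ)^2/(2*c)), (Real.exp_pos _).le, fun s hs => ?_⟩
  have h1 : (1+s)^n ≤ Real.exp ((n:ℝ)*s) := by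
    calc (1+s)^n ≤ (Real.exp s)^n :=
          pow_le_pow_left₀ (by linarith) (by linarith [Real.add_one_le_exp s]) n
    _ = Real.exp ((n:ℝ)*s) := by rw [← Real.exp_nat_mul]
  calc (1+s)^n * Real.exp (-(c*s^2))
      ≤ Real.exp ((n:ℝ)*s) * Real.exp (-(c*s^2)) :=
        mul_le_mul_of_nonneg_right h1 (Real.exp_pos _).le
    _ = Real.exp ((n:ℝ)*s + -(c*s^2)) := by rw [← Real.exp_add]
    _ ≤ Real.exp ((n:ℝ)^2/(2*c) + -(c/2*s^2)) := by
        apply Real.exp_le_exp.2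
        have key : (n:ℝ)*s - c/2*s^2 ≤ (n:ℝ)^2/(2*c) := by
          rw [le_div_iff₀ (by linarith)]
          nlinarith [sq_nonneg (c*s - (n:ℝ))]
        linarith
    _ = _ := by rw [Real.exp_add]

lemma posdef_lb (hm : 0 < m) {P : Matrix (Fin m) (Fin m) ℝ} (hPd : P.PosDef) :
    ∃ ε > 0, ∀ v : Fin m → ℝ, ε * ‖v‖^2 ≤ dotProduct v (P.mulVec v) := by
  haveI : Nonempty (Fin m) := ⟨⟨0, hm⟩⟩
  have hf : Continuous fun v : Fin m → ℝ => dotProduct v (P.mulVec v) := by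
    simp only [dotProduct, Matrix.mulVec]
    exact continuous_finset_sum _ fun i _ => (continuous_apply i).mul
      (continuous_finset_sum _ fun j _ => continuous_const.mul (continuous_apply j))
  have hS : IsCompact (Metric.sphere (0 : Fin m → ℝ) 1) := isCompact_sphere _ _
  have hne : (Metric.sphere (0 : Fin m → ℝ) 1).Nonempty :=
    NormedSpace.sphere_nonempty.2 zero_le_one
  obtain ⟨v0, hv0S, hmin⟩ := hS.exists_isMinOn hne hf.continuousOn
  have hv0 : v0 ≠ 0 := by
    intro h
    rw [mem_sphere_iff_norm, h] at hv0S
    simp at hv0S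
  have hε : 0 < dotProduct v0 (P.mulVec v0) := by
    have := hPd.dotProduct_mulVec_pos hv0
    simpa using this
  refine ⟨_, hε, fun v => ?_⟩
  rcases eq_or_ne v 0 with rfl | hv
  · simp
  · have hnv : 0 < ‖v‖ := norm_pos_iff.2 hv
    set u := ‖v‖⁻¹ • v with hu
    have huS : u ∈ Metric.sphere (0 : Fin m → ℝ) 1 := by
      rw [mem_sphere_iff_norm, sub_zero, hu, norm_smul]
      simp [abs_of_nonneg (inv_nonneg.2 hnv.le), inv_mul_cancel₀ hnv.ne']
    have hvu : v = ‖v‖ • u := by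
      rw [hu, smul_smul, mul_inv_cancel₀ hnv.ne', one_smul]
    have hquad : dotProduct v (P.mulVec v)
        = ‖v‖^2 * dotProduct u (P.mulVec u) := by
      conv_lhs => rw [hvu]
      simp only [Matrix.mulVec_smul, smul_dotProduct, dotProduct_smul,
        smul_eq_mul]
      ring
    rw [hquad]
    have hmin' := (isMinOn_iff.1 hmin) u huS
    nlinarith [sq_nonneg ‖v‖, hnv]

lemma integrable_of_gauss_bound (hm : 0 < m) {P : Matrix (Fin m) (Fin m) ℝ} (hPd : P.PosDef)
    (μv : Fin m → ℝ) (n : ℕ) {D : ℝ} (hD : 0 ≤ D) {f : (Fin m → ℝ) → ℝ}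
    (hf : Continuous f)
    (hle : ∀ x, |f x| ≤ D * (1+‖x‖)^n *
      Real.exp (-(dotProduct (x - μv) (P.mulVec (x - μv))) / 2)) :
    Integrable f := by
  obtain ⟨ε, hε, hlb⟩ := posdef_lb hm hPd
  obtain ⟨K, hK, hKb⟩ := poly_exp_bound n (by positivity : (0:ℝ) < ε/4)
  set c2 : ℝ := ε/8/m with hc2
  have hc2pos : 0 < c2 := by positivity
  set M : ℝ := D * Real.exp (ε/2 * ‖μv‖^2) * K with hM
  have hMpos : 0 ≤ M := by positivity
  have key : ∀ x : Fin m → ℝ, |f x| ≤ M * ∏ i, Real.exp (-(c2 * (x i)^2)) := by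
    intro x
    have h1 : Real.exp (-(dotProduct (x - μv) (P.mulVec (x - μv))) / 2)
        ≤ Real.exp (ε/2 * ‖μv‖^2) * Real.exp (-(ε/4 * ‖x‖^2)) := by
      rw [← Real.exp_add, Real.exp_le_exp]
      have h2 := hlb (x - μv)
      have h3 : ‖x‖ ≤ ‖x - μv‖ + ‖μv‖ := by
        calc ‖x‖ = ‖(x - μv) + μv‖ := by rw [sub_add_cancel]
        _ ≤ ‖x - μv‖ + ‖μv‖ := norm_add_le _ _
      have h4 : ‖x‖^2 ≤ 2*‖x - μv‖^2 + 2*‖μv‖^2 := by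
        have h4a : ‖x‖^2 ≤ (‖x - μv‖ + ‖μv‖)^2 := pow_le_pow_left₀ (norm_nonneg x) h3 2
        nlinarith [sq_nonneg (‖x - μv‖ - ‖μv‖)]
      nlinarith [mul_le_mul_of_nonneg_left h4 (le_of_lt (half_pos hε))]
    have h5 : (1+‖x‖)^n * Real.exp (-(ε/4 * ‖x‖^2)) ≤ K * Real.exp (-(ε/4/2 * ‖x‖^2)) :=
      hKb ‖x‖ (norm_nonneg x)
    have h6 : Real.exp (-(ε/4/2 * ‖x‖^2)) ≤ ∏ i, Real.exp (-(c2 * (x i)^2)) := by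
      rw [← Real.exp_sum, Real.exp_le_exp]
      have h7 : ∑ i, (x i)^2 ≤ m * ‖x‖^2 := by
        calc ∑ i, (x i)^2 ≤ ∑ _i : Fin m, ‖x‖^2 := by
              apply Finset.sum_le_sum
              intro i _
              have h8 : |x i| ≤ ‖x‖ := by simpa using norm_le_pi_norm x i
              exact sq_le_sq' (by linarith [(abs_le.1 h8).1]) (abs_le.1 h8).2
        _ = m * ‖x‖^2 := by simp [Finset.sum_const, nsmul_eq_mul]
      have h9 : ∑ i, -(c2 * (x i)^2) = -(c2 * ∑ i, (x i)^2) := by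
        rw [Finset.mul_sum]
        exact Finset.sum_neg_distrib _
      rw [h9]
      have hm' : (0:ℝ) < m := by exact_mod_cast hm
      rw [hc2]
      rw [neg_le_neg_iff]
      calc ε/8/m * ∑ i, (x i)^2 ≤ ε/8/m * (m * ‖x‖^2) := by
            apply mul_le_mul_of_nonneg_left h7 (by positivity)
        _ = ε/8 * ‖x‖^2 := by field_simp
        _ = ε/4/2 * ‖x‖^2 := by ring
    calc |f x| ≤ D * (1+‖x‖)^n *
          Real.exp (-(dotProduct (x - μv) (P.mulVec (x - μv))) / 2) := hle x
      _ ≤ D * (1+‖x‖)^n * (Real.exp (ε/2 * ‖μv‖^2) * Real.exp (-(ε/4 * ‖x‖^2))) := by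
          apply mul_le_mul_of_nonneg_left h1 (by positivity)
      _ = D * Real.exp (ε/2 * ‖μv‖^2) * ((1+‖x‖)^n * Real.exp (-(ε/4 * ‖x‖^2))) := by ring
      _ ≤ D * Real.exp (ε/2 * ‖μv‖^2) * (K * Real.exp (-(ε/4/2 * ‖x‖^2))) := by
          apply mul_le_mul_of_nonneg_left h5 (by positivity)
      _ = M * Real.exp (-(ε/4/2 * ‖x‖^2)) := by rw [hM]; ring
      _ ≤ M * ∏ i, Real.exp (-(c2 * (x i)^2)) := mul_le_mul_of_nonneg_left h6 hMpos
  have hint : Integrable (fun x : Fin m → ℝ => M * ∏ i, Real.exp (-(c2 * (x i)^2))) := by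
    apply Integrable.const_mul
    apply Integrable.fintype_prod (f := fun (_ : Fin m) (t : ℝ) => Real.exp (-(c2 * t^2)))
    intro i
    simpa [sq] using integrable_exp_neg_mul_sq hc2pos
  exact hint.mono' hf.aestronglyMeasurable (ae_of_all _ fun x => by
    rw [Real.norm_eq_abs]; exact key x)
set_option maxHeartbeats 2000000 in
theorem stmt_17 (m : ℕ) (μv : Fin m → ℝ) (Sg : Matrix (Fin m) (Fin m) ℝ) (hSg : Sg.PosDef)
    (g : (Fin m → ℝ) → ℝ) (hg : ContDiff ℝ 2 g)
    (C : ℝ) (hb : ∀ x, |g x| ≤ C ∧ ‖fderiv ℝ g x‖ ≤ C ∧ ‖fderiv ℝ (fderiv ℝ g) x‖ ≤ C) :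
    let pdf : (Fin m → ℝ) → ℝ := fun x =>
      (Real.sqrt ((2 * Real.pi) ^ m * Sg.det))⁻¹ *
        Real.exp (-(dotProduct (x - μv) (Sg⁻¹.mulVec (x - μv))) / 2)
    let hess : (Fin m → ℝ) → Matrix (Fin m) (Fin m) ℝ := fun x =>
      Matrix.of fun i j => fderiv ℝ (fun y => fderiv ℝ g y (Pi.single j 1)) x (Pi.single i 1)
    (Matrix.of fun i j => ∫ x, g x * (x i - μv i) * (x j - μv j) * pdf x) -
        (∫ x, g x * pdf x) • Sg =
      Sg * (Matrix.of fun i j => ∫ x, hess x i j * pdf x) * Sg := by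
  intro pdf hess
  rcases Nat.eq_zero_or_pos m with hm0 | hm
  · ext i j
    exact absurd i.isLt (by omega)
  -- notation
  set P : Matrix (Fin m) (Fin m) ℝ := Sg⁻¹ with hPdef
  set c0 : ℝ := (Real.sqrt ((2 * Real.pi) ^ m * Sg.det))⁻¹ with hc0def
  have hc0 : 0 ≤ c0 := inv_nonneg.2 (Real.sqrt_nonneg _)
  have hPd : P.PosDef := hSg.inv
  have hSgsym : ∀ i j, Sg i j = Sg j i := by
    intro i j
    conv_rhs => rw [← hSg.1]
    rfl
  have hPsym : Pᵀ = P := by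
    rw [hPdef, Matrix.transpose_nonsing_inv]
    congr 1
    ext i j
    rw [Matrix.transpose_apply, hSgsym]
  -- basic facts about g
  have hC0 : 0 ≤ C := le_trans (abs_nonneg _) (hb 0).1
  have hgd : Differentiable ℝ g := hg.differentiable (by norm_num)
  have hg1 : ContDiff ℝ 1 (fderiv ℝ g) := hg.fderiv_right (le_refl _)
  have hf'd : Differentiable ℝ (fderiv ℝ g) := hg1.differentiable (by norm_num)
  have hf''c : Continuous (fderiv ℝ (fderiv ℝ g)) := (hg1.fderiv_right (m := 0) (by norm_num)).continuous
  have he : ∀ k : Fin m, ‖(Pi.single k 1 : Fin m → ℝ)‖ = 1 := by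
    intro k
    rw [Pi.norm_single]
    exact norm_one
  have hgb : ∀ x, |g x| ≤ C := fun x => (hb x).1
  have hgrad : ∀ x (k : Fin m), |fderiv ℝ g x (Pi.single k 1)| ≤ C := by
    intro x k
    calc |fderiv ℝ g x (Pi.single k 1)| ≤ ‖fderiv ℝ g x‖ * ‖(Pi.single k 1 : Fin m → ℝ)‖ :=
          (fderiv ℝ g x).le_opNorm _
    _ = ‖fderiv ℝ g x‖ := by rw [he k, mul_one]
    _ ≤ C := (hb x).2.1
  have hsnd : ∀ x (k l : Fin m), |fderiv ℝ (fderiv ℝ g) x (Pi.single k 1) (Pi.single l 1)| ≤ C := by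
    intro x k l
    calc |fderiv ℝ (fderiv ℝ g) x (Pi.single k 1) (Pi.single l 1)|
        ≤ ‖fderiv ℝ (fderiv ℝ g) x (Pi.single k 1)‖ * ‖(Pi.single l 1 : Fin m → ℝ)‖ :=
          (fderiv ℝ (fderiv ℝ g) x (Pi.single k 1)).le_opNorm _
    _ ≤ (‖fderiv ℝ (fderiv ℝ g) x‖ * ‖(Pi.single k 1 : Fin m → ℝ)‖) *
          ‖(Pi.single l 1 : Fin m → ℝ)‖ := by
        apply mul_le_mul_of_nonneg_right ((fderiv ℝ (fderiv ℝ g) x).le_opNorm _) (norm_nonneg _)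
    _ = ‖fderiv ℝ (fderiv ℝ g) x‖ := by rw [he k, he l, mul_one, mul_one]
    _ ≤ C := (hb x).2.2
  -- second derivative as iterated fderiv
  have hcomp : ∀ (w : Fin m → ℝ) (x : Fin m → ℝ), HasFDerivAt (fun y => fderiv ℝ g y w)
      ((ContinuousLinearMap.apply ℝ ℝ w).comp (fderiv ℝ (fderiv ℝ g) x)) x := by
    intro w x
    exact (ContinuousLinearMap.apply ℝ ℝ w).hasFDerivAt.comp x (hf'd x).hasFDerivAt
  have hess_eq : ∀ x (k l : Fin m), hess x k l
      = fderiv ℝ (fderiv ℝ g) x (Pi.single k 1) (Pi.single l 1) := by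
    intro x k l
    show fderiv ℝ (fun y => fderiv ℝ g y (Pi.single l 1)) x (Pi.single k 1) = _
    rw [(hcomp (Pi.single l 1) x).fderiv]
    rfl
  have hsymm : ∀ x (k l : Fin m), hess x k l = hess x l k := by
    intro x k l
    rw [hess_eq, hess_eq]
    exact second_derivative_symmetric (fun y => (hgd y).hasFDerivAt) (hf'd x).hasFDerivAt _ _
  -- continuity facts
  have hgc : Continuous g := hgd.continuous
  have hcoordc : ∀ j : Fin m, Continuous (fun x : Fin m → ℝ => x j - μv j) :=
    fun j => (continuous_apply j).sub continuous_const
  have hgradc : ∀ k : Fin m, Continuous (fun x => fderiv ℝ g x (Pi.single k 1)) := by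
    intro k
    exact hg1.continuous.clm_apply continuous_const
  have hhessc : ∀ k l : Fin m, Continuous (fun x => hess x k l) := by
    intro k l
    have : (fun x => hess x k l)
        = fun x => fderiv ℝ (fderiv ℝ g) x (Pi.single k 1) (Pi.single l 1) :=
      funext fun x => hess_eq x k l
    rw [this]
    exact (hf''c.clm_apply continuous_const).clm_apply continuous_const
  have hPc : ∀ k : Fin m, Continuous (fun x : Fin m → ℝ => (P *ᵥ (x - μv)) k) := by
    intro k
    simp only [Matrix.mulVec, dotProduct]
    exact continuous_finset_sum _ fun j _ => continuous_const.mul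
      ((continuous_apply j).sub continuous_const)
  -- bounds on auxiliary coordinate functions
  set Q : ℝ := 1 + ‖μv‖ with hQdef
  have hQ1 : 1 ≤ Q := by
    rw [hQdef]
    linarith [norm_nonneg μv]
  have hQ0 : 0 ≤ Q := by linarith
  have hcoordb : ∀ (x : Fin m → ℝ) (j : Fin m), |x j - μv j| ≤ Q * (1 + ‖x‖) := by
    intro x j
    have h1 : |x j - μv j| ≤ ‖x - μv‖ := by
      have := norm_le_pi_norm (x - μv) j
      simpa [Real.norm_eq_abs] using this
    have h2 : ‖x - μv‖ ≤ ‖x‖ + ‖μv‖ := norm_sub_le x μv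
    have h3 : ‖x‖ + ‖μv‖ ≤ Q * (1 + ‖x‖) := by
      rw [hQdef]
      nlinarith [norm_nonneg x, norm_nonneg μv]
    linarith
  set CP : ℝ := ∑ a, ∑ b, |P a b| with hCPdef
  have hCP0 : 0 ≤ CP :=
    Finset.sum_nonneg fun a _ => Finset.sum_nonneg fun b _ => abs_nonneg _
  have hPmvb : ∀ (x : Fin m → ℝ) (k : Fin m), |(P *ᵥ (x - μv)) k| ≤ CP * Q * (1 + ‖x‖) := by
    intro x k
    have h1 : |(P *ᵥ (x - μv)) k| ≤ ∑ b, |P k b| * ‖x - μv‖ := by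
      show |∑ b, P k b * (x - μv) b| ≤ _
      refine le_trans (Finset.abs_sum_le_sum_abs _ _) (Finset.sum_le_sum fun b _ => ?_)
      rw [abs_mul]
      refine mul_le_mul_of_nonneg_left ?_ (abs_nonneg _)
      simpa [Real.norm_eq_abs] using norm_le_pi_norm (x - μv) b
    have h2 : ∑ b, |P k b| * ‖x - μv‖ = (∑ b, |P k b|) * ‖x - μv‖ := by
      rw [Finset.sum_mul]
    have h3 : (∑ b, |P k b|) ≤ CP := by
      rw [hCPdef]
      exact Finset.single_le_sum (f := fun a => ∑ b, |P a b|)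
        (fun a _ => Finset.sum_nonneg fun b _ => abs_nonneg _) (Finset.mem_univ k)
    have h4 : ‖x - μv‖ ≤ Q * (1 + ‖x‖) := by
      have h2' : ‖x - μv‖ ≤ ‖x‖ + ‖μv‖ := norm_sub_le x μv
      have h3' : ‖x‖ + ‖μv‖ ≤ Q * (1 + ‖x‖) := by
        rw [hQdef]
        nlinarith [norm_nonneg x, norm_nonneg μv]
      linarith
    calc |(P *ᵥ (x - μv)) k| ≤ (∑ b, |P k b|) * ‖x - μv‖ := by rw [← h2]; exact h1
    _ ≤ CP * (Q * (1 + ‖x‖)) := by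
        apply mul_le_mul h3 h4 (norm_nonneg _) hCP0
    _ = CP * Q * (1 + ‖x‖) := by ring
  -- master integrability
  have hpdf_eq : ∀ x, pdf x
      = c0 * Real.exp (-(dotProduct (x - μv) (P.mulVec (x - μv))) / 2) := fun x => rfl
  have hpdf_nonneg : ∀ x, 0 ≤ pdf x := fun x =>
    mul_nonneg hc0 (Real.exp_pos _).le
  have intg : ∀ (F : (Fin m → ℝ) → ℝ) (n : ℕ) (D : ℝ), Continuous F → 0 ≤ D →
      (∀ x, |F x| ≤ D * (1 + ‖x‖)^n) → Integrable (fun x => F x * pdf x) := by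
    intro F n D hFc hD hFb
    apply integrable_of_gauss_bound hm hPd μv n (D := D * c0) (by positivity)
      (hFc.mul (by
        have : Continuous fun x : Fin m → ℝ =>
            Real.exp (-(dotProduct (x - μv) (P.mulVec (x - μv))) / 2) := by
          apply Real.continuous_exp.comp
          apply Continuous.div_const
          apply Continuous.neg
          simp only [dotProduct, Matrix.mulVec]
          exact continuous_finset_sum _ fun i _ => ((continuous_apply i).sub continuous_const).mul
            (continuous_finset_sum _ fun j _ => continuous_const.mul
              ((continuous_apply j).sub continuous_const))
        exact continuous_const.mul this))
    intro x
    rw [Pi.mul_apply, abs_mul, hpdf_eq x, abs_mul]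
    rw [abs_of_nonneg hc0, abs_of_nonneg (Real.exp_pos _).le]
    calc |F x| * (c0 * Real.exp (-(dotProduct (x - μv) (P.mulVec (x - μv))) / 2))
        ≤ (D * (1 + ‖x‖)^n) * (c0 * Real.exp (-(dotProduct (x - μv) (P.mulVec (x - μv))) / 2)) := by
          apply mul_le_mul_of_nonneg_right (hFb x) (by positivity)
    _ = D * c0 * (1 + ‖x‖)^n * Real.exp (-(dotProduct (x - μv) (P.mulVec (x - μv))) / 2) := by
          ring

  -- pdf differentiability
  have hpdf_d : ∀ x, HasFDerivAt pdf ((-(pdf x)) • LP P μv x) x := fun x =>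
    hasFDerivAt_pdfa P hPsym μv c0 x
  have hpdf_fd : ∀ (x : Fin m → ℝ) (k : Fin m), fderiv ℝ pdf x (Pi.single k 1)
      = -((P *ᵥ (x - μv)) k * pdf x) := by
    intro x k
    rw [(hpdf_d x).fderiv]
    rw [ContinuousLinearMap.smul_apply, LP_apply, smul_eq_mul]
    ring
  have hpdf_diff : Differentiable ℝ pdf := fun x => (hpdf_d x).differentiableAt
  -- integrability instances
  have hdiffc : ∀ j : Fin m, Differentiable ℝ (fun x : Fin m → ℝ => x j - μv j) :=
    fun j x => ((hasFDerivAt_apply j x).sub_const (μv j)).differentiableAt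
  have int1 : Integrable (fun x => g x * pdf x) :=
    intg g 0 C hgc hC0 (fun x => by simpa using hgb x)
  have int2 : ∀ j, Integrable (fun x => g x * (x j - μv j) * pdf x) := by
    intro j
    refine intg _ 1 (C * Q) (hgc.mul (hcoordc j)) (by positivity) (fun x => ?_)
    rw [abs_mul]
    calc |g x| * |x j - μv j| ≤ C * (Q * (1 + ‖x‖)) :=
          mul_le_mul (hgb x) (hcoordb x j) (abs_nonneg _) hC0
    _ = C * Q * (1 + ‖x‖) ^ 1 := by ring
  have int3 : ∀ i j, Integrable (fun x => g x * (x i - μv i) * (x j - μv j) * pdf x) := by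
    intro i j
    refine intg _ 2 (C * Q * Q) ((hgc.mul (hcoordc i)).mul (hcoordc j)) (by positivity)
      (fun x => ?_)
    rw [abs_mul, abs_mul]
    calc |g x| * |x i - μv i| * |x j - μv j|
        ≤ (C * (Q * (1 + ‖x‖))) * (Q * (1 + ‖x‖)) := by
          apply mul_le_mul _ (hcoordb x j) (abs_nonneg _) (by positivity)
          exact mul_le_mul (hgb x) (hcoordb x i) (abs_nonneg _) hC0
    _ = C * Q * Q * (1 + ‖x‖) ^ 2 := by ring
  have int4 : ∀ k, Integrable (fun x => fderiv ℝ g x (Pi.single k 1) * pdf x) := by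
    intro k
    exact intg _ 0 C (hgradc k) hC0 (fun x => by simpa using hgrad x k)
  have int5 : ∀ k j, Integrable (fun x => fderiv ℝ g x (Pi.single k 1) * (x j - μv j) * pdf x) := by
    intro k j
    refine intg _ 1 (C * Q) ((hgradc k).mul (hcoordc j)) (by positivity) (fun x => ?_)
    rw [abs_mul]
    calc |fderiv ℝ g x (Pi.single k 1)| * |x j - μv j| ≤ C * (Q * (1 + ‖x‖)) :=
          mul_le_mul (hgrad x k) (hcoordb x j) (abs_nonneg _) hC0
    _ = C * Q * (1 + ‖x‖) ^ 1 := by ring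
  have int6 : ∀ k j, Integrable (fun x => g x * (x j - μv j) * ((P *ᵥ (x - μv)) k) * pdf x) := by
    intro k j
    refine intg _ 2 (C * Q * (CP * Q)) ((hgc.mul (hcoordc j)).mul (hPc k)) (by positivity)
      (fun x => ?_)
    rw [abs_mul, abs_mul]
    calc |g x| * |x j - μv j| * |(P *ᵥ (x - μv)) k|
        ≤ (C * (Q * (1 + ‖x‖))) * (CP * Q * (1 + ‖x‖)) := by
          apply mul_le_mul _ (hPmvb x k) (abs_nonneg _) (by positivity)
          exact mul_le_mul (hgb x) (hcoordb x j) (abs_nonneg _) hC0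
    _ = C * Q * (CP * Q) * (1 + ‖x‖) ^ 2 := by ring
  have int7 : ∀ k l, Integrable (fun x => hess x k l * pdf x) := by
    intro k l
    refine intg _ 0 C (hhessc k l) hC0 (fun x => ?_)
    rw [hess_eq]
    simpa using hsnd x k l
  have int8 : ∀ k l, Integrable
      (fun x => fderiv ℝ g x (Pi.single l 1) * ((P *ᵥ (x - μv)) k) * pdf x) := by
    intro k l
    refine intg _ 1 (C * (CP * Q)) ((hgradc l).mul (hPc k)) (by positivity) (fun x => ?_)
    rw [abs_mul]
    calc |fderiv ℝ g x (Pi.single l 1)| * |(P *ᵥ (x - μv)) k|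
        ≤ C * (CP * Q * (1 + ‖x‖)) :=
          mul_le_mul (hgrad x l) (hPmvb x k) (abs_nonneg _) hC0
    _ = C * (CP * Q) * (1 + ‖x‖) ^ 1 := by ring
  -- Stein identity
  have stein : ∀ (u : (Fin m → ℝ) → ℝ) (k : Fin m), Differentiable ℝ u →
      Integrable (fun x => u x * pdf x) →
      Integrable (fun x => fderiv ℝ u x (Pi.single k 1) * pdf x) →
      Integrable (fun x => u x * ((P *ᵥ (x - μv)) k) * pdf x) →
      ∫ x, u x * ((P *ᵥ (x - μv)) k) * pdf x
        = ∫ x, fderiv ℝ u x (Pi.single k 1) * pdf x := by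
    intro u k hud hu1 hu2 hu3
    have heq : (fun x => u x * fderiv ℝ pdf x (Pi.single k 1))
        = fun x => -(u x * ((P *ᵥ (x - μv)) k) * pdf x) :=
      funext fun x => by rw [hpdf_fd]; ring
    have h := integral_mul_fderiv_eq_neg_fderiv_mul_of_integrable (μ := volume)
      (f := u) (g := pdf) (v := Pi.single k 1) hu2 (by rw [heq]; exact hu3.neg) hu1
      (fun x _ => hud x) (fun x _ => hpdf_diff x)
    rw [show (∫ x, u x * fderiv ℝ pdf x (Pi.single k 1))
        = ∫ x, -(u x * ((P *ᵥ (x - μv)) k) * pdf x) from by rw [heq], integral_neg] at h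
    exact neg_injective h
  -- first application
  have S1 : ∀ (k j : Fin m), ∫ x, g x * (x j - μv j) * ((P *ᵥ (x - μv)) k) * pdf x
      = (∫ x, fderiv ℝ g x (Pi.single k 1) * (x j - μv j) * pdf x)
        + (if j = k then 1 else 0) * ∫ x, g x * pdf x := by
    intro k j
    have hud : Differentiable ℝ (fun x : Fin m → ℝ => g x * (x j - μv j)) :=
      hgd.mul (hdiffc j)
    have hfd : ∀ x, fderiv ℝ (fun x : Fin m → ℝ => g x * (x j - μv j)) x (Pi.single k 1)
        = fderiv ℝ g x (Pi.single k 1) * (x j - μv j) + g x * (if j = k then 1 else 0) := by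
      intro x
      have h1 : HasFDerivAt (fun x : Fin m → ℝ => g x * (x j - μv j))
          ((g x) • (ContinuousLinearMap.proj j) + (x j - μv j) • (fderiv ℝ g x)) x :=
        (hgd x).hasFDerivAt.mul ((hasFDerivAt_apply j x).sub_const (μv j))
      rw [h1.fderiv]
      simp only [ContinuousLinearMap.add_apply, ContinuousLinearMap.smul_apply,
        ContinuousLinearMap.proj_apply, smul_eq_mul, Pi.single_apply]
      ring
    have hint : Integrable (fun x =>
        fderiv ℝ (fun x : Fin m → ℝ => g x * (x j - μv j)) x (Pi.single k 1) * pdf x) := by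
      rw [show (fun x =>
            fderiv ℝ (fun x : Fin m → ℝ => g x * (x j - μv j)) x (Pi.single k 1) * pdf x)
          = fun x => fderiv ℝ g x (Pi.single k 1) * (x j - μv j) * pdf x
              + (if j = k then 1 else 0) * (g x * pdf x) from
        funext fun x => by rw [hfd x]; ring]
      exact (int5 k j).add (int1.const_mul _)
    have h := stein (fun x : Fin m → ℝ => g x * (x j - μv j)) k hud (int2 j) hint (int6 k j)
    rw [h]
    rw [show (fun x =>
          fderiv ℝ (fun x : Fin m → ℝ => g x * (x j - μv j)) x (Pi.single k 1) * pdf x)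
        = fun x => fderiv ℝ g x (Pi.single k 1) * (x j - μv j) * pdf x
            + (if j = k then 1 else 0) * (g x * pdf x) from
      funext fun x => by rw [hfd x]; ring]
    rw [integral_add (int5 k j) (int1.const_mul _), integral_const_mul]
  -- second application
  have S2 : ∀ (k l : Fin m), ∫ x, fderiv ℝ g x (Pi.single l 1) * ((P *ᵥ (x - μv)) k) * pdf x
      = ∫ x, hess x k l * pdf x := by
    intro k l
    have hud : Differentiable ℝ (fun x => fderiv ℝ g x (Pi.single l 1)) :=
      fun x => (hcomp (Pi.single l 1) x).differentiableAt
    exact stein (fun x => fderiv ℝ g x (Pi.single l 1)) k hud (int4 l) (int7 k l) (int8 k l)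
  -- expansion of coordinates
  have hexp : ∀ (x : Fin m → ℝ) (i : Fin m),
      x i - μv i = ∑ k, Sg i k * ((P *ᵥ (x - μv)) k) := by
    intro x i
    have h1 : Sg *ᵥ (P *ᵥ (x - μv)) = x - μv := by
      rw [Matrix.mulVec_mulVec, hPdef, Matrix.mul_nonsing_inv _ hSg.det_pos.ne'.isUnit,
        Matrix.one_mulVec]
    calc x i - μv i = (x - μv) i := rfl
    _ = (Sg *ᵥ (P *ᵥ (x - μv))) i := by rw [h1]
    _ = ∑ k, Sg i k * ((P *ᵥ (x - μv)) k) := by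
        simp [Matrix.mulVec, dotProduct]
  have hM : ∀ i j, ∫ x, g x * (x i - μv i) * (x j - μv j) * pdf x
      = ∑ k, Sg i k * ∫ x, g x * (x j - μv j) * ((P *ᵥ (x - μv)) k) * pdf x := by
    intro i j
    rw [show (fun x => g x * (x i - μv i) * (x j - μv j) * pdf x)
        = fun x => ∑ k, Sg i k * (g x * (x j - μv j) * ((P *ᵥ (x - μv)) k) * pdf x) from
      funext fun x => by
        rw [show g x * (x i - μv i) * (x j - μv j) * pdf x
            = (x i - μv i) * (g x * (x j - μv j) * pdf x) from by ring, hexp x i,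
          Finset.sum_mul]
        exact Finset.sum_congr rfl fun k _ => by ring]
    rw [integral_finset_sum _ (fun k _ => ((int6 k j).const_mul _))]
    exact Finset.sum_congr rfl fun k _ => integral_const_mul _ _
  have hDexp : ∀ (k j : Fin m), ∫ x, fderiv ℝ g x (Pi.single k 1) * (x j - μv j) * pdf x
      = ∑ l, Sg j l * ∫ x, hess x l k * pdf x := by
    intro k j
    rw [show (fun x => fderiv ℝ g x (Pi.single k 1) * (x j - μv j) * pdf x)
        = fun x => ∑ l, Sg j l * (fderiv ℝ g x (Pi.single k 1) * ((P *ᵥ (x - μv)) l) * pdf x) from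
      funext fun x => by
        rw [show fderiv ℝ g x (Pi.single k 1) * (x j - μv j) * pdf x
            = (x j - μv j) * (fderiv ℝ g x (Pi.single k 1) * pdf x) from by ring, hexp x j,
          Finset.sum_mul]
        exact Finset.sum_congr rfl fun l _ => by ring]
    rw [integral_finset_sum _ (fun l _ => ((int8 l k).const_mul _))]
    exact Finset.sum_congr rfl fun l _ => by rw [integral_const_mul, S2 l k]
  have hswap : ∀ a b : Fin m, (∫ x, hess x a b * pdf x) = ∫ x, hess x b a * pdf x := by
    intro a b
    rw [show (fun x => hess x a b * pdf x) = fun x => hess x b a * pdf x from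
      funext fun x => by rw [hsymm x a b]]
  -- final assembly
  ext i j
  simp only [Matrix.sub_apply, Matrix.of_apply, Matrix.smul_apply, smul_eq_mul, Matrix.mul_apply]
  rw [hM i j]
  rw [Finset.sum_congr rfl fun k _ => by rw [S1 k j]]
  simp only [mul_add, Finset.sum_add_distrib]
  rw [show ∑ k, Sg i k * ((if j = k then 1 else 0) * ∫ x, g x * pdf x)
      = Sg i j * ∫ x, g x * pdf x from by
    simp [mul_ite, Finset.sum_ite_eq]]
  rw [Finset.sum_congr rfl fun k _ => by rw [hDexp k j]]
  have key : ∑ k, Sg i k * (∑ l, Sg j l * (∫ x, hess x l k * pdf x))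
      = ∑ l, (∑ k, Sg i k * (∫ x, hess x k l * pdf x)) * Sg l j := by
    simp only [Finset.mul_sum, Finset.sum_mul]
    rw [Finset.sum_comm]
    refine Finset.sum_congr rfl fun l _ => Finset.sum_congr rfl fun k _ => ?_
    rw [hswap l k, hSgsym j l]
    ring
  rw [key]
  ring
end
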